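/- For every real x > 0, 1 - Φ(x) < 2φ(x)/(√(8/π + x²) + x) (Pollak's upper bound). -/

import Mathlib

open MeasureTheory Real

/-- Standard Gaussian density. -/
noncomputable def gaussPdf (x : ℝ) : ℝ := Real.exp (-x ^ 2 / 2) / Real.sqrt (2 * Real.pi)

/-- Standard Gaussian distribution function. -/
noncomputable def gaussCdf (x : ℝ) : ℝ := ∫ t in Set.Iic x, gaussPdf t

/-- Finite continued fraction `hcf k g x = x + 1/(x + 2/(⋯ + k/(g x)))`,
with `hcf 0 g = g`. -/
noncomputable def hcf : ℕ → (ℝ → ℝ) → ℝ → ℝ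
  | 0, g => g
  | (k + 1), g => hcf k (fun x => x + ((k : ℝ) + 1) / g x)


section PollakAux
open Set Filter

lemma gaussPdf_pos (x : ℝ) : 0 < gaussPdf x :=
  div_pos (exp_pos _) (Real.sqrt_pos.2 (by positivity))

lemma gaussPdf_cont : Continuous gaussPdf := by
  unfold gaussPdf; continuity

lemma gaussPdf_integrable : Integrable gaussPdf := by
  have h : Integrable (fun x : ℝ => Real.exp (-(1/2 : ℝ) * x ^ 2)) :=
    integrable_exp_neg_mul_sq (by norm_num)
  have := h.div_const (Real.sqrt (2 * Real.pi))
  convert this using 2 with x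
  unfold gaussPdf; ring_nf

lemma integral_gaussPdf : ∫ x, gaussPdf x = 1 := by
  have h : ∫ x : ℝ, Real.exp (-(1/2 : ℝ) * x ^ 2) = Real.sqrt (Real.pi / (1/2)) :=
    integral_gaussian (1/2)
  have h2 : ∫ x, gaussPdf x = (∫ x : ℝ, Real.exp (-(1/2 : ℝ) * x ^ 2)) / Real.sqrt (2 * Real.pi) := by
    rw [← integral_div]
    congr 1 with x
    unfold gaussPdf; ring_nf
  rw [h2, h]
  rw [show Real.pi / (1/2) = 2 * Real.pi by ring]
  rw [div_self (by positivity)]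

lemma gaussCdf_zero : gaussCdf 0 = 1 / 2 := by
  have heven : ∀ t : ℝ, gaussPdf (-t) = gaussPdf t := by
    intro t; unfold gaussPdf; rw [neg_pow]; ring_nf
  have h1 : gaussCdf 0 = ∫ t in Set.Ioi (0:ℝ), gaussPdf t := by
    unfold gaussCdf
    rw [show (0:ℝ) = -0 by ring, ← integral_comp_neg_Iic]
    simp only [heven, neg_zero]
  have h2 : gaussCdf 0 + ∫ t in Set.Ioi (0:ℝ), gaussPdf t = 1 := by
    unfold gaussCdf
    rw [intervalIntegral.integral_Iic_add_Ioi gaussPdf_integrable.integrableOn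
      gaussPdf_integrable.integrableOn, integral_gaussPdf]
  rw [h1] at h2 ⊢
  linarith

lemma hasDerivAt_gaussCdf (x : ℝ) : HasDerivAt gaussCdf (gaussPdf x) x := by
  have key : ∀ u : ℝ, gaussCdf u = gaussCdf 0 + ∫ t in (0:ℝ)..u, gaussPdf t := by
    intro u
    have := intervalIntegral.integral_Iic_sub_Iic (μ := volume) (f := gaussPdf) (a := 0) (b := u)
      gaussPdf_integrable.integrableOn gaussPdf_integrable.integrableOn
    unfold gaussCdf
    linarith [this]
  have hD : HasDerivAt (fun u => gaussCdf 0 + ∫ t in (0:ℝ)..u, gaussPdf t) (gaussPdf x) x := by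
    refine (HasDerivAt.const_add _ ?_)
    exact intervalIntegral.integral_hasDerivAt_right
      (gaussPdf_integrable.intervalIntegrable)
      (gaussPdf_cont.stronglyMeasurableAtFilter _ _)
      gaussPdf_cont.continuousAt
  exact hD.congr_of_eventuallyEq (Filter.Eventually.of_forall key)

lemma tendsto_gaussCdf_atTop : Tendsto gaussCdf atTop (nhds 1) := by
  have := MeasureTheory.tendsto_setIntegral_of_monotone (μ := volume)
    (s := fun r : ℝ => Set.Iic r) (f := gaussPdf)
    (fun r => measurableSet_Iic) (fun a b hab => Set.Iic_subset_Iic.2 hab)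
    (by rw [Set.iUnion_Iic]; exact gaussPdf_integrable.integrableOn)
  rw [Set.iUnion_Iic, MeasureTheory.Measure.restrict_univ, integral_gaussPdf] at this
  exact this

lemma tendsto_gaussPdf_atTop : Tendsto gaussPdf atTop (nhds 0) := by
  unfold gaussPdf
  rw [show (0:ℝ) = 0 / Real.sqrt (2 * Real.pi) by simp]
  apply Tendsto.div_const
  apply Real.tendsto_exp_atBot.comp
  apply Filter.Tendsto.atBot_div_const (by norm_num : (0:ℝ) < 2)
  apply tendsto_neg_atTop_atBot.comp
  exact tendsto_pow_atTop (by norm_num)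

lemma hasDerivAt_gaussPdf (x : ℝ) : HasDerivAt gaussPdf (-x * gaussPdf x) x := by
  unfold gaussPdf
  have h1 : HasDerivAt (fun x : ℝ => -x ^ 2 / 2) (-x) x := by
    have := ((hasDerivAt_pow 2 x).neg).div_const 2
    exact this.congr_deriv (by push_cast; ring)
  have h2 : HasDerivAt (fun x : ℝ => Real.exp (-x ^ 2 / 2)) (Real.exp (-x^2/2) * (-x)) x :=
    (Real.hasDerivAt_exp _).comp x h1
  have := h2.div_const (Real.sqrt (2 * Real.pi))
  exact this.congr_deriv (by ring)

noncomputable def sq8 (x : ℝ) : ℝ := Real.sqrt (8 / Real.pi + x ^ 2)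

lemma sq8_pos (x : ℝ) : 0 < sq8 x := Real.sqrt_pos.2 (by positivity)

lemma sq8_sq (x : ℝ) : sq8 x ^ 2 = 8 / Real.pi + x ^ 2 :=
  Real.sq_sqrt (by positivity)

lemma hasDerivAt_sq8 (x : ℝ) : HasDerivAt sq8 (x / sq8 x) x := by
  have h1 : HasDerivAt (fun x : ℝ => 8 / Real.pi + x ^ 2) (2 * x) x := by
    have := (hasDerivAt_pow 2 x).const_add (8 / Real.pi)
    exact this.congr_deriv (by push_cast; ring)
  have h2 := (Real.hasDerivAt_sqrt (by positivity : (8 / Real.pi + x ^ 2) ≠ 0)).comp x h1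
  refine h2.congr_deriv ?_
  unfold sq8
  field_simp

noncomputable def hFun (x : ℝ) : ℝ :=
  Real.pi / 4 * (x * sq8 x - x ^ 2 + 1 - x / sq8 x) - 1

noncomputable def gFun (x : ℝ) : ℝ :=
  (1 - gaussCdf x) - Real.pi / 4 * (sq8 x - x) * gaussPdf x


lemma hasDerivAt_gFun (x : ℝ) : HasDerivAt gFun (gaussPdf x * hFun x) x := by
  have hs := hasDerivAt_sq8 x
  have hφ := hasDerivAt_gaussPdf x
  have hΦ := hasDerivAt_gaussCdf x
  have h1 : HasDerivAt (fun x => Real.pi / 4 * (sq8 x - x) * gaussPdf x)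
      (Real.pi / 4 * (x / sq8 x - 1) * gaussPdf x
        + Real.pi / 4 * (sq8 x - x) * (-x * gaussPdf x)) x := by
    exact (((hs.sub (hasDerivAt_id x)).const_mul (Real.pi / 4)).mul hφ)
  have h2 : HasDerivAt gFun (0 - gaussPdf x -
      (Real.pi / 4 * (x / sq8 x - 1) * gaussPdf x
        + Real.pi / 4 * (sq8 x - x) * (-x * gaussPdf x))) x :=
    ((hasDerivAt_const x (1:ℝ)).sub hΦ).sub h1
  convert h2 using 1
  unfold hFun
  have hs0 := (sq8_pos x).ne'
  field_simp
  ring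

noncomputable def u₁ : ℝ := (4 / Real.pi - 1) ^ 2 / (1 - 2 / Real.pi)

lemma c1_pos : 0 < 1 - 2 / Real.pi := by
  have := Real.pi_gt_three
  rw [sub_pos, div_lt_one Real.pi_pos]; linarith

lemma b_pos : 0 < 4 / Real.pi - 1 := by
  have := Real.pi_lt_d2
  rw [sub_pos, lt_div_iff₀ Real.pi_pos]; linarith

lemma u₁_pos : 0 < u₁ := div_pos (pow_pos b_pos 2) c1_pos

lemma key_identity (x : ℝ) :
    4 / Real.pi * (sq8 x * hFun x) =
      x * (x ^ 2 + 8 / Real.pi - 1) - sq8 x * (x ^ 2 + (4 / Real.pi - 1)) := by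
  have hs := (sq8_pos x).ne'
  have hs2 := sq8_sq x
  have hπ := Real.pi_ne_zero
  have hs2' : Real.pi * sq8 x ^ 2 = 8 + Real.pi * x ^ 2 := by
    rw [sq8_sq]; field_simp
  unfold hFun
  field_simp
  linear_combination x * hs2'

lemma sq_identity (x : ℝ) :
    (x * (x ^ 2 + 8 / Real.pi - 1)) ^ 2 - (sq8 x * (x ^ 2 + (4 / Real.pi - 1))) ^ 2 =
      8 / Real.pi * ((1 - 2 / Real.pi) * x ^ 2 - (4 / Real.pi - 1) ^ 2) := by
  have hs2 := sq8_sq x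
  have hπ := Real.pi_ne_zero
  rw [mul_pow, mul_pow, hs2]
  field_simp
  ring

lemma L_pos {x : ℝ} (hx : 0 < x) : 0 < x * (x ^ 2 + 8 / Real.pi - 1) := by
  have h8 : 1 < 8 / Real.pi := by
    have := Real.pi_lt_d2
    rw [lt_div_iff₀ Real.pi_pos]; linarith
  nlinarith [sq_nonneg x]

lemma R_pos (x : ℝ) : 0 < sq8 x * (x ^ 2 + (4 / Real.pi - 1)) := by
  have := b_pos
  have := sq8_pos x
  nlinarith [sq_nonneg x]

lemma hFun_neg {x : ℝ} (hx : 0 < x) (hx2 : x ^ 2 < u₁) : hFun x < 0 := by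
  have hLR : x * (x ^ 2 + 8 / Real.pi - 1) < sq8 x * (x ^ 2 + (4 / Real.pi - 1)) := by
    apply lt_of_pow_lt_pow_left₀ 2 (R_pos x).le
    have hd : (1 - 2 / Real.pi) * x ^ 2 - (4 / Real.pi - 1) ^ 2 < 0 := by
      have := c1_pos
      rw [u₁, lt_div_iff₀ c1_pos] at hx2
      nlinarith
    have h8 : 0 < 8 / Real.pi := by positivity
    nlinarith [sq_identity x]
  have h4 : 4 / Real.pi * (sq8 x * hFun x) < 0 := by
    rw [key_identity x]; linarith
  have hπ : 0 < 4 / Real.pi := by positivity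
  by_contra hc
  push_neg at hc
  have : 0 ≤ 4 / Real.pi * (sq8 x * hFun x) :=
    mul_nonneg hπ.le (mul_nonneg (sq8_pos x).le hc)
  linarith

lemma hFun_pos {x : ℝ} (hx : 0 < x) (hx2 : u₁ < x ^ 2) : 0 < hFun x := by
  have hLR : sq8 x * (x ^ 2 + (4 / Real.pi - 1)) < x * (x ^ 2 + 8 / Real.pi - 1) := by
    apply lt_of_pow_lt_pow_left₀ 2 (L_pos hx).le
    have hd : 0 < (1 - 2 / Real.pi) * x ^ 2 - (4 / Real.pi - 1) ^ 2 := by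
      rw [u₁, div_lt_iff₀ c1_pos] at hx2
      nlinarith
    have h8 : 0 < 8 / Real.pi := by positivity
    nlinarith [sq_identity x]
  have h4 : 0 < 4 / Real.pi * (sq8 x * hFun x) := by
    rw [key_identity x]; linarith
  have hπ : 0 < 4 / Real.pi := by positivity
  by_contra hc
  push_neg at hc
  have : 4 / Real.pi * (sq8 x * hFun x) ≤ 0 :=
    mul_nonpos_of_nonneg_of_nonpos hπ.le (mul_nonpos_of_nonneg_of_nonpos (sq8_pos x).le hc)
  linarith

noncomputable def x₁ : ℝ := Real.sqrt u₁

lemma x₁_pos : 0 < x₁ := Real.sqrt_pos.2 u₁_pos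
lemma x₁_sq : x₁ ^ 2 = u₁ := Real.sq_sqrt u₁_pos.le

lemma gFun_cont : Continuous gFun :=
  continuous_iff_continuousAt.2 fun x => (hasDerivAt_gFun x).continuousAt

lemma deriv_gFun (x : ℝ) : deriv gFun x = gaussPdf x * hFun x :=
  (hasDerivAt_gFun x).deriv

lemma gFun_anti : StrictAntiOn gFun (Set.Icc 0 x₁) := by
  apply strictAntiOn_of_deriv_neg (convex_Icc 0 x₁) gFun_cont.continuousOn
  intro x hx
  rw [interior_Icc] at hx
  rw [deriv_gFun]
  have hx2 : x ^ 2 < u₁ := by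
    rw [← x₁_sq]
    exact pow_lt_pow_left₀ hx.2 hx.1.le two_ne_zero
  exact mul_neg_of_pos_of_neg (gaussPdf_pos x) (hFun_neg hx.1 hx2)

lemma gFun_mono : StrictMonoOn gFun (Set.Ici x₁) := by
  apply strictMonoOn_of_deriv_pos (convex_Ici x₁) gFun_cont.continuousOn
  intro x hx
  rw [interior_Ici] at hx
  rw [deriv_gFun]
  have hx0 : 0 < x := lt_trans x₁_pos hx
  have hx2 : u₁ < x ^ 2 := by
    rw [← x₁_sq]
    exact pow_lt_pow_left₀ hx x₁_pos.le two_ne_zero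
  exact mul_pos (gaussPdf_pos x) (hFun_pos hx0 hx2)

lemma sq8_sub_le (x : ℝ) (hx : 0 ≤ x) : sq8 x - x ≤ Real.sqrt (8 / Real.pi) := by
  have h1 : sq8 x ≤ Real.sqrt (8 / Real.pi) + x := by
    rw [show Real.sqrt (8 / Real.pi) + x
        = Real.sqrt ((Real.sqrt (8 / Real.pi) + x) ^ 2) from
      (Real.sqrt_sq (by positivity)).symm]
    apply Real.sqrt_le_sqrt
    have := Real.sq_sqrt (by positivity : (0:ℝ) ≤ 8 / Real.pi)
    have := Real.sqrt_nonneg (8 / Real.pi)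
    nlinarith
  linarith

lemma sq8_sub_nonneg (x : ℝ) (hx : 0 ≤ x) : 0 ≤ sq8 x - x := by
  have h0 : 0 < 8 / Real.pi := by positivity
  have : x ≤ sq8 x := Real.le_sqrt_of_sq_le (by linarith)
  linarith

lemma tendsto_gFun_atTop : Tendsto gFun atTop (nhds 0) := by
  have t1 : Tendsto (fun x => 1 - gaussCdf x) atTop (nhds 0) := by
    have := tendsto_const_nhds (x := (1:ℝ)) (f := atTop).sub tendsto_gaussCdf_atTop
    simpa using this
  have t2 : Tendsto (fun x => Real.pi / 4 * (sq8 x - x) * gaussPdf x) atTop (nhds 0) := by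
    have hub : Tendsto (fun x => Real.pi / 4 * Real.sqrt (8 / Real.pi) * gaussPdf x)
        atTop (nhds 0) := by
      have := tendsto_gaussPdf_atTop.const_mul (Real.pi / 4 * Real.sqrt (8 / Real.pi))
      simpa using this
    apply tendsto_of_tendsto_of_tendsto_of_le_of_le' tendsto_const_nhds hub
    · filter_upwards [eventually_ge_atTop (0:ℝ)] with x hx
      have := sq8_sub_nonneg x hx
      have := gaussPdf_pos x
      positivity
    · filter_upwards [eventually_ge_atTop (0:ℝ)] with x hx
      have h1 := sq8_sub_le x hx
      have h2 := (gaussPdf_pos x).le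
      have h5 := mul_le_mul_of_nonneg_right h1 h2
      calc Real.pi / 4 * (sq8 x - x) * gaussPdf x
          = Real.pi / 4 * ((sq8 x - x) * gaussPdf x) := by ring
        _ ≤ Real.pi / 4 * (Real.sqrt (8 / Real.pi) * gaussPdf x) :=
            mul_le_mul_of_nonneg_left h5 (by positivity)
        _ = Real.pi / 4 * Real.sqrt (8 / Real.pi) * gaussPdf x := by ring
  have := t1.sub t2
  rw [sub_zero] at this
  exact this

lemma gFun_nonpos {y : ℝ} (hy : x₁ ≤ y) : gFun y ≤ 0 := by
  apply ge_of_tendsto tendsto_gFun_atTop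
  filter_upwards [eventually_ge_atTop y] with z hz
  exact (gFun_mono.monotoneOn) (Set.mem_Ici.2 hy) (Set.mem_Ici.2 (hy.trans hz)) hz

lemma gFun_zero : gFun 0 = 0 := by
  have h1 : gaussPdf 0 = 1 / Real.sqrt (2 * Real.pi) := by
    unfold gaussPdf; norm_num
  have h2 : sq8 0 = Real.sqrt (8 / Real.pi) := by unfold sq8; norm_num
  have h3 : Real.sqrt (8 / Real.pi) / Real.sqrt (2 * Real.pi) = 2 / Real.pi := by
    rw [← Real.sqrt_div (by positivity)]
    rw [show 8 / Real.pi / (2 * Real.pi) = (2 / Real.pi) ^ 2 by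
      field_simp; ring]
    exact Real.sqrt_sq (by positivity)
  have h4 : Real.pi / 4 * Real.sqrt (8 / Real.pi) * (1 / Real.sqrt (2 * Real.pi))
      = 1 / 2 := by
    have h5 : Real.sqrt (8 / Real.pi) * (1 / Real.sqrt (2 * Real.pi)) = 2 / Real.pi := by
      rw [mul_one_div, h3]
    rw [mul_assoc, h5]
    field_simp
    ring
  unfold gFun
  rw [gaussCdf_zero, h1, h2, sub_zero]
  linarith [h4]

lemma gFun_neg {x : ℝ} (hx : 0 < x) : gFun x < 0 := by
  rcases le_or_gt x x₁ with hle | hgt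
  · have := gFun_anti (Set.mem_Icc.2 ⟨le_refl 0, x₁_pos.le⟩)
      (Set.mem_Icc.2 ⟨hx.le, hle⟩) hx
    rw [gFun_zero] at this
    exact this
  · have h1 : gFun x < gFun (x + 1) :=
      gFun_mono (Set.mem_Ici.2 hgt.le) (Set.mem_Ici.2 (by linarith)) (by linarith)
    have h2 : gFun (x + 1) ≤ 0 := gFun_nonpos (by linarith)
    linarith

end PollakAux


/-- Pollak's upper bound. -/
theorem pollak_upper_bound (x : ℝ) (hx : 0 < x) :
    1 - gaussCdf x < 2 * gaussPdf x / (Real.sqrt (8 / Real.pi + x ^ 2) + x) := by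
  have hg := gFun_neg hx
  unfold gFun at hg
  have hs : Real.sqrt (8 / Real.pi + x ^ 2) = sq8 x := rfl
  rw [hs]
  have hsx : 0 < sq8 x + x := by linarith [sq8_pos x]
  have heq : 2 * gaussPdf x / (sq8 x + x) = Real.pi / 4 * (sq8 x - x) * gaussPdf x := by
    rw [div_eq_iff hsx.ne']
    have hs2' : Real.pi * sq8 x ^ 2 = 8 + Real.pi * x ^ 2 := by
      rw [sq8_sq]; field_simp
    have h8 : (sq8 x - x) * (sq8 x + x) * Real.pi = 8 := by
      linear_combination hs2'
    linear_combination (-(gaussPdf x) / 4) * h8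
  rw [heq]
  linarith
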